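/- Let (f_i, g_i)_{i=1,2} be a linking passage of ordered partial commutative monoids M₁ and M₂, i.e. changes of domain g_i : K → M_i and f_i : M_i → N with f₁(g₁(k)) ≅ f₂(g₂(k)) for all k ∈ K. Let g₁* be the upper adjoint of g₁ and f₂* the upper adjoint of f₂. Then for every x ∈ M₁, g₂(g₁*(x)) ⪯ f₂*(f₁(x)). -/
import Mathlib


/-- An ordered partial commutative monoid (OPCM), given by a preorder `le`,
a definedness predicate `D` (written `x ⊥ y` in the paper), a (total extension
of a) partial binary operation `op`, and an identity `zero`.  The equivalence
`x ≅ y` is `le x y ∧ le y x`. -/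
structure IsOPCM {α : Type*} (le : α → α → Prop) (D : α → α → Prop)
    (op : α → α → α) (zero : α) : Prop where
  refl : ∀ x, le x x
  trans : ∀ {x y z}, le x y → le y z → le x z
  zero_defined : ∀ x, D zero x
  zero_op : ∀ x, le (op zero x) x ∧ le x (op zero x)
  comm_defined : ∀ {x y}, D x y → D y x
  comm : ∀ {x y}, D x y → le (op x y) (op y x) ∧ le (op y x) (op x y)
  assoc_defined_left : ∀ {x y z}, D y z → D x (op y z) → D x y
  assoc_defined : ∀ {x y z}, D y z → D x (op y z) → D (op x y) z
  assoc : ∀ {x y z}, D y z → D x (op y z) →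
    le (op x (op y z)) (op (op x y) z) ∧ le (op (op x y) z) (op x (op y z))
  mono : ∀ {x₁ x₂ y}, D x₁ y → D x₂ y → le x₁ x₂ → le (op x₁ y) (op x₂ y)
/-- A homomorphism of OPCMs: monotone, preserves the identity up to `≅`,
preserves definedness, and preserves the partial operation up to `≅`. -/
structure IsOPCMHom {α β : Type*}
    (leM : α → α → Prop) (DM : α → α → Prop) (opM : α → α → α) (zM : α)
    (leN : β → β → Prop) (DN : β → β → Prop) (opN : β → β → β) (zN : β)
    (f : α → β) : Prop where
  mono : ∀ {x y}, leM x y → leN (f x) (f y)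
  zero : leN (f zM) zN ∧ leN zN (f zM)
  defined : ∀ {x y}, DM x y → DN (f x) (f y)
  op : ∀ {x y}, DM x y → leN (f (opM x y)) (opN (f x) (f y)) ∧
    leN (opN (f x) (f y)) (f (opM x y))

/-- given a linking passage `(fᵢ, gᵢ)` of `M₁` and `M₂` (changes of
domain `gᵢ : K → Mᵢ`, `fᵢ : Mᵢ → N` commuting up to `≅`), transferring
information from `M₁` to `M₂` through the common domain `K` is below
transferring it through the larger domain `N`: `g₂ (g₁* x) ⪯ f₂* (f₁ x)`. -/
theorem linking_passage_two_extensions {K M₁ M₂ N : Type*}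
    (leK DK : K → K → Prop) (opK : K → K → K) (zK : K)
    (le₁ D₁ : M₁ → M₁ → Prop) (op₁ : M₁ → M₁ → M₁) (z₁ : M₁)
    (le₂ D₂ : M₂ → M₂ → Prop) (op₂ : M₂ → M₂ → M₂) (z₂ : M₂)
    (leN DN : N → N → Prop) (opN : N → N → N) (zN : N)
    (hK : IsOPCM leK DK opK zK) (h₁ : IsOPCM le₁ D₁ op₁ z₁)
    (h₂ : IsOPCM le₂ D₂ op₂ z₂) (hN : IsOPCM leN DN opN zN)
    (g₁ : K → M₁) (g₂ : K → M₂) (f₁ : M₁ → N) (f₂ : M₂ → N)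
    (hg₁ : IsOPCMHom leK DK opK zK le₁ D₁ op₁ z₁ g₁)
    (hg₂ : IsOPCMHom leK DK opK zK le₂ D₂ op₂ z₂ g₂)
    (hf₁ : IsOPCMHom le₁ D₁ op₁ z₁ leN DN opN zN f₁)
    (hf₂ : IsOPCMHom le₂ D₂ op₂ z₂ leN DN opN zN f₂)
    -- each of the four maps is a lower adjoint (change of domain)
    (g₁s : M₁ → K) (hg₁s_mono : ∀ {a b}, le₁ a b → leK (g₁s a) (g₁s b))
    (hg₁gc : ∀ (k : K) (m : M₁), le₁ (g₁ k) m ↔ leK k (g₁s m))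
    (g₂s : M₂ → K) (hg₂s_mono : ∀ {a b}, le₂ a b → leK (g₂s a) (g₂s b))
    (hg₂gc : ∀ (k : K) (m : M₂), le₂ (g₂ k) m ↔ leK k (g₂s m))
    (f₁s : N → M₁) (hf₁s_mono : ∀ {a b}, leN a b → le₁ (f₁s a) (f₁s b))
    (hf₁gc : ∀ (m : M₁) (n : N), leN (f₁ m) n ↔ le₁ m (f₁s n))
    (f₂s : N → M₂) (hf₂s_mono : ∀ {a b}, leN a b → le₂ (f₂s a) (f₂s b))
    (hf₂gc : ∀ (m : M₂) (n : N), leN (f₂ m) n ↔ le₂ m (f₂s n))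
    -- the square commutes up to equivalence
    (hcomm : ∀ k : K, leN (f₁ (g₁ k)) (f₂ (g₂ k)) ∧ leN (f₂ (g₂ k)) (f₁ (g₁ k))) :
    ∀ x : M₁, le₂ (g₂ (g₁s x)) (f₂s (f₁ x)) := by
  intro x
  rw [← hf₂gc]
  have hcounit : le₁ (g₁ (g₁s x)) x := (hg₁gc _ _).mpr (hK.refl _)
  exact hN.trans (hcomm (g₁s x)).2 (hf₁.mono hcounit)
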